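/- arXiv:0712.0374 — 2 statements merged into one kernel-verified Lean document; each statement's English description precedes it below -/
import Mathlib

section
/- There exists a constant C > 0 such that the following holds: for all D > 0, δ > 0, reals K ≥ 1 and R ≥ 1, every function u : ℤ³ → ℂ with u(0) = 0, with |u(α)| ≤ D/|α|² for all α ≠ 0, and with |u(β)| ≤ δ/|β|² for all β with |β| ≥ R, and every k ∈ ℤ³ with |k| ≥ 2R, one has Σ_{α ∈ ℤ³, 0 < |α| ≤ K, |k−α| ≥ |k|/2} |α|·|u(α)|·|u(k−α)| ≤ C·δ·D·K²/|k|². -/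
noncomputable def znorm (a : Fin 3 → ℤ) : ℝ := Real.sqrt (∑ i, ((a i : ℝ)) ^ 2)

lemma znorm_nonneg (a : Fin 3 → ℤ) : 0 ≤ znorm a := Real.sqrt_nonneg _

lemma abs_le_znorm (a : Fin 3 → ℤ) (i : Fin 3) : |(a i : ℝ)| ≤ znorm a := by
  have h1 : (a i : ℝ) ^ 2 ≤ ∑ j, ((a j : ℝ)) ^ 2 :=
    Finset.single_le_sum (f := fun j => ((a j : ℝ)) ^ 2) (fun j _ => sq_nonneg _) (Finset.mem_univ i)
  calc |(a i : ℝ)| = Real.sqrt ((a i : ℝ) ^ 2) := (Real.sqrt_sq_eq_abs _).symm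
    _ ≤ znorm a := Real.sqrt_le_sqrt h1

lemma natAbs_le_znorm (a : Fin 3 → ℤ) (i : Fin 3) : (((a i).natAbs : ℝ)) ≤ znorm a := by
  rw [Nat.cast_natAbs, Int.cast_abs]; exact abs_le_znorm a i

set_option maxRecDepth 4000 in
lemma sum_inv_znorm_le (N : ℕ) :
    ∑ a ∈ (Fintype.piFinset fun _ : Fin 3 => Finset.Icc (-(N:ℤ)) N).filter (fun a => a ≠ 0),
      (znorm a)⁻¹ ≤ 54 * (N:ℝ) ^ 2 := by
  classical
  set B := (Fintype.piFinset fun _ : Fin 3 => Finset.Icc (-(N:ℤ)) N) with hB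
  set T := B.filter (fun a => a ≠ 0) with hT
  set M : (Fin 3 → ℤ) → ℕ := fun a => Finset.univ.sup fun i => (a i).natAbs with hM
  have hmemB : ∀ a ∈ T, ∀ i, (a i).natAbs ≤ N := by
    intro a ha i
    have := (Finset.mem_filter.mp ha).1
    rw [hB, Fintype.mem_piFinset] at this
    have h2 := this i
    rw [Finset.mem_Icc] at h2
    omega
  have hmaps : ∀ a ∈ T, M a ∈ Finset.Icc 1 N := by
    intro a ha
    rw [Finset.mem_Icc]
    constructor
    · obtain ⟨i, hi⟩ : ∃ i, a i ≠ 0 := by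
        by_contra hc; push_neg at hc
        exact (Finset.mem_filter.mp ha).2 (funext hc)
      have h1 : 1 ≤ (a i).natAbs := by omega
      exact h1.trans (Finset.le_sup (f := fun j => (a j).natAbs) (Finset.mem_univ i))
    · exact Finset.sup_le fun i _ => hmemB a ha i
  rw [← Finset.sum_fiberwise_of_maps_to hmaps]
  have hinner : ∀ n ∈ Finset.Icc 1 N,
      ∑ a ∈ T.filter (fun a => M a = n), (znorm a)⁻¹ ≤ 54 * (n : ℝ) := by
    intro n hn
    rw [Finset.mem_Icc] at hn
    have hn1 : 1 ≤ n := hn.1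
    have hnR : (1:ℝ) ≤ (n:ℝ) := by exact_mod_cast hn1
    -- card bound
    have hcard : (T.filter (fun a => M a = n)).card ≤ 6 * (2 * n + 1) ^ 2 := by
      have hsub : T.filter (fun a => M a = n) ⊆
          Finset.biUnion Finset.univ (fun p : Fin 3 × Bool =>
            Fintype.piFinset fun j => if j = p.1 then ({(if p.2 then (n:ℤ) else -(n:ℤ))} : Finset ℤ)
              else Finset.Icc (-(n:ℤ)) n) := by
        intro a ha
        rw [Finset.mem_filter] at ha
        obtain ⟨haT, haM⟩ := ha
        obtain ⟨i, _, hi⟩ := Finset.exists_mem_eq_sup (Finset.univ : Finset (Fin 3))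
          Finset.univ_nonempty (fun i => (a i).natAbs)
        have hin : (a i).natAbs = n := by rw [← haM, hM]; exact hi.symm
        have hbnd : ∀ j, a j ∈ Finset.Icc (-(n:ℤ)) n := by
          intro j
          have : (a j).natAbs ≤ n := by
            rw [← haM]; exact Finset.le_sup (f := fun i => (a i).natAbs) (Finset.mem_univ j)
          rw [Finset.mem_Icc]; omega
        rcases Int.natAbs_eq (a i) with h | h
        · refine Finset.mem_biUnion.mpr ⟨(i, true), Finset.mem_univ _, ?_⟩
          rw [Fintype.mem_piFinset]
          intro j
          by_cases hj : j = i
          · subst hj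
            rw [if_pos rfl, if_pos rfl, Finset.mem_singleton, h, hin]
          · rw [if_neg hj]; exact hbnd j
        · refine Finset.mem_biUnion.mpr ⟨(i, false), Finset.mem_univ _, ?_⟩
          rw [Fintype.mem_piFinset]
          intro j
          by_cases hj : j = i
          · subst hj
            rw [if_pos rfl, if_neg (by simp), Finset.mem_singleton, h, hin]
          · rw [if_neg hj]; exact hbnd j
      refine (Finset.card_le_card hsub).trans ((Finset.card_biUnion_le).trans ?_)
      have hpc : ∀ p : Fin 3 × Bool,
          (Fintype.piFinset fun j => if j = p.1 then ({(if p.2 then (n:ℤ) else -(n:ℤ))} : Finset ℤ)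
              else Finset.Icc (-(n:ℤ)) n).card = (2 * n + 1) ^ 2 := by
        intro p
        rw [Fintype.card_piFinset]
        have hfac : ∀ j : Fin 3,
            (if j = p.1 then ({(if p.2 then (n:ℤ) else -(n:ℤ))} : Finset ℤ)
              else Finset.Icc (-(n:ℤ)) n).card = if j = p.1 then 1 else (2 * n + 1) := by
          intro j
          split
          · simp
          · rw [Int.card_Icc]; omega
        rw [Finset.prod_congr rfl (fun j _ => hfac j),
          Finset.prod_eq_prod_diff_singleton_mul (Finset.mem_univ p.1), if_pos rfl, mul_one,
          Finset.prod_congr rfl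
            (fun j hj => if_neg (Finset.notMem_singleton.mp (Finset.mem_sdiff.mp hj).2)),
          Finset.prod_const, Finset.card_sdiff_of_subset (by simp)]
        simp
      calc ∑ p : Fin 3 × Bool, _ ≤ ∑ p : Fin 3 × Bool, (2 * n + 1) ^ 2 :=
            Finset.sum_le_sum fun p _ => le_of_eq (hpc p)
        _ = 6 * (2 * n + 1) ^ 2 := by
            rw [Finset.sum_const, Finset.card_univ]
            simp [mul_comm]
    -- each term bounded by n⁻¹
    have hterm : ∀ a ∈ T.filter (fun a => M a = n), (znorm a)⁻¹ ≤ ((n:ℝ))⁻¹ := by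
      intro a ha
      rw [Finset.mem_filter] at ha
      obtain ⟨i, _, hi⟩ := Finset.exists_mem_eq_sup (Finset.univ : Finset (Fin 3))
        Finset.univ_nonempty (fun i => (a i).natAbs)
      have hin : (a i).natAbs = n := by rw [← ha.2, hM]; exact hi.symm
      have h1 : (n : ℝ) ≤ znorm a := by rw [← hin]; exact natAbs_le_znorm a i
      exact inv_anti₀ (by linarith) h1
    calc ∑ a ∈ T.filter (fun a => M a = n), (znorm a)⁻¹
        ≤ (T.filter (fun a => M a = n)).card • ((n:ℝ))⁻¹ :=
          Finset.sum_le_card_nsmul _ _ _ hterm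
      _ = ((T.filter (fun a => M a = n)).card : ℝ) * ((n:ℝ))⁻¹ := by rw [nsmul_eq_mul]
      _ ≤ (6 * (2 * (n:ℝ) + 1) ^ 2) * ((n:ℝ))⁻¹ := by
          apply mul_le_mul_of_nonneg_right _ (by positivity)
          exact_mod_cast hcard
      _ ≤ (54 * (n:ℝ) ^ 2) * ((n:ℝ))⁻¹ := by
          apply mul_le_mul_of_nonneg_right _ (by positivity)
          nlinarith
      _ = 54 * (n:ℝ) := by
          field_simp
  calc ∑ n ∈ Finset.Icc 1 N, ∑ a ∈ T.filter (fun a => M a = n), (znorm a)⁻¹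
      ≤ ∑ n ∈ Finset.Icc 1 N, 54 * (n:ℝ) := Finset.sum_le_sum hinner
    _ ≤ ∑ n ∈ Finset.Icc 1 N, 54 * (N:ℝ) := by
        refine Finset.sum_le_sum fun n hn => ?_
        have := (Finset.mem_Icc.mp hn).2
        have : (n:ℝ) ≤ N := by exact_mod_cast this
        linarith
    _ = (Finset.Icc 1 N).card * (54 * (N:ℝ)) := by rw [Finset.sum_const, nsmul_eq_mul]
    _ ≤ 54 * (N:ℝ) ^ 2 := by
        rw [Nat.card_Icc]
        have h : N + 1 - 1 = N := by omega
        rw [h]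
        apply le_of_eq
        ring

lemma znorm_zero : znorm 0 = 0 := by simp [znorm]

lemma one_le_znorm {a : Fin 3 → ℤ} (h : a ≠ 0) : 1 ≤ znorm a := by
  obtain ⟨i, hi⟩ : ∃ i, a i ≠ 0 := by
    by_contra hc; push_neg at hc; exact h (funext hc)
  have h1 : (1 : ℝ) ≤ |(a i : ℝ)| := by
    rw [← Int.cast_abs]; exact_mod_cast Int.one_le_abs hi
  exact h1.trans (abs_le_znorm a i)

/-- There is a constant `C > 0` such that: for all `D > 0`, `δ > 0`, `K ≥ 1`, `R ≥ 1`,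
every `u : ℤ³ → ℂ` with `u 0 = 0`, `|u α| ≤ D/|α|²` for all `α ≠ 0`, and
`|u β| ≤ δ/|β|²` for all `|β| ≥ R`, and every `k` with `|k| ≥ 2R`,
`∑_{0 < |α| ≤ K, |k−α| ≥ |k|/2} |α|·|u α|·|u (k−α)| ≤ C·δ·D·K²/|k|²`. -/
theorem low_frequency_piece_bound :
    ∃ C : ℝ, 0 < C ∧
      ∀ (D δ K R : ℝ), 0 < D → 0 < δ → 1 ≤ K → 1 ≤ R →
        ∀ u : (Fin 3 → ℤ) → ℂ, u 0 = 0 →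
          (∀ α : Fin 3 → ℤ, α ≠ 0 → ‖u α‖ ≤ D / znorm α ^ 2) →
          (∀ β : Fin 3 → ℤ, R ≤ znorm β → ‖u β‖ ≤ δ / znorm β ^ 2) →
          ∀ k : Fin 3 → ℤ, 2 * R ≤ znorm k →
            (∑' α : {a : Fin 3 → ℤ //
                0 < znorm a ∧ znorm a ≤ K ∧ znorm k / 2 ≤ znorm (k - a)},
              znorm α.1 * ‖u α.1‖ * ‖u (k - α.1)‖)
              ≤ C * δ * D * K ^ 2 / znorm k ^ 2 := by
  classical
  refine ⟨864, by norm_num, ?_⟩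
  intro D δ K R hD hδ hK hR u hu0 hu1 hu2 k hk
  set s : Set (Fin 3 → ℤ) :=
    {a | 0 < znorm a ∧ znorm a ≤ K ∧ znorm k / 2 ≤ znorm (k - a)} with hs
  set f : (Fin 3 → ℤ) → ℝ := fun a => znorm a * ‖u a‖ * ‖u (k - a)‖ with hf
  set N : ℕ := ⌈K⌉₊ with hN
  set B := (Fintype.piFinset fun _ : Fin 3 => Finset.Icc (-(N:ℤ)) N) with hB
  have hKN : K ≤ (N : ℝ) := Nat.le_ceil K
  have hNK : (N : ℝ) ≤ 2 * K := by
    have := Nat.ceil_lt_add_one (by linarith : (0:ℝ) ≤ K)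
    linarith
  have hzk : 0 < znorm k := by linarith
  -- the tsum equals a finite sum
  have hzero : ∀ b ∉ B, s.indicator f b = 0 := by
    intro b hb
    apply Set.indicator_of_notMem
    intro hbs
    apply hb
    rw [hB, Fintype.mem_piFinset]
    intro i
    rw [Finset.mem_Icc]
    have h1 : |(b i : ℝ)| ≤ K := (abs_le_znorm b i).trans hbs.2.1
    have h2 : |(b i : ℝ)| ≤ (N : ℝ) := h1.trans hKN
    rw [← Int.cast_abs] at h2
    have h3 : |b i| ≤ (N : ℤ) := by exact_mod_cast h2
    exact abs_le.mp h3
  have heq : (∑' α : {a : Fin 3 → ℤ //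
        0 < znorm a ∧ znorm a ≤ K ∧ znorm k / 2 ≤ znorm (k - a)}, f α.1)
      = ∑ a ∈ B, s.indicator f a := by
    exact (tsum_subtype s f).trans (tsum_eq_sum hzero)
  rw [heq]
  -- pointwise bound
  set c : ℝ := 4 * δ * D / znorm k ^ 2 with hc
  have hc0 : 0 ≤ c := by positivity
  have hpt : ∀ a ∈ B, s.indicator f a ≤ c * (if a ≠ 0 then (znorm a)⁻¹ else 0) := by
    intro a _
    by_cases ha : a ∈ s
    · rw [Set.indicator_of_mem ha]
      obtain ⟨h0, hKa, hk2⟩ := ha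
      have hane : a ≠ 0 := by
        rintro rfl; rw [znorm_zero] at h0; exact lt_irrefl _ h0
      rw [if_pos hane]
      have hza : 1 ≤ znorm a := one_le_znorm hane
      have hb1 : ‖u a‖ ≤ D / znorm a ^ 2 := hu1 a hane
      have hRk : R ≤ znorm (k - a) := by linarith [hk2]
      have hb2 : ‖u (k - a)‖ ≤ δ / znorm (k - a) ^ 2 := hu2 _ hRk
      have hka : 0 < znorm (k - a) := by linarith
      have hb3 : δ / znorm (k - a) ^ 2 ≤ 4 * δ / znorm k ^ 2 := by
        have hsq : (znorm k / 2) ^ 2 ≤ znorm (k - a) ^ 2 :=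
          pow_le_pow_left₀ (by positivity) hk2 2
        rw [div_le_div_iff₀ (by positivity) (by positivity)]
        nlinarith [hsq, hδ.le]
      have step : f a ≤ znorm a * (D / znorm a ^ 2) * (4 * δ / znorm k ^ 2) := by
        apply mul_le_mul
        · exact mul_le_mul_of_nonneg_left hb1 (znorm_nonneg a)
        · exact hb2.trans hb3
        · exact norm_nonneg _
        · positivity
      refine step.trans (le_of_eq ?_)
      rw [hc]
      have hza0 : znorm a ≠ 0 := by linarith
      field_simp
    · rw [Set.indicator_of_notMem ha]
      have h0 : (0:ℝ) ≤ (if a ≠ 0 then (znorm a)⁻¹ else 0) := by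
        split
        · exact inv_nonneg.mpr (znorm_nonneg a)
        · exact le_rfl
      exact mul_nonneg hc0 h0
  calc ∑ a ∈ B, s.indicator f a
      ≤ ∑ a ∈ B, c * (if a ≠ 0 then (znorm a)⁻¹ else 0) := Finset.sum_le_sum hpt
    _ = c * ∑ a ∈ B.filter (fun a => a ≠ 0), (znorm a)⁻¹ := by
        rw [← Finset.mul_sum, Finset.sum_filter]
    _ ≤ c * (54 * (N:ℝ) ^ 2) := by
        apply mul_le_mul_of_nonneg_left (sum_inv_znorm_le N) hc0
    _ ≤ c * (216 * K ^ 2) := by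
        apply mul_le_mul_of_nonneg_left _ hc0
        nlinarith [hKN, hNK]
    _ = 864 * δ * D * K ^ 2 / znorm k ^ 2 := by
        rw [hc]; ring
end

section
/- For every function u : ℤ³ → ℂ with u(0) = 0 and Σ_{α ≠ 0} |α|·|u(α)|² < ∞, and every k ∈ ℤ³ with k ≠ 0, one has Σ_{α ∈ ℤ³, |α| ≥ 2|k|} |α|·|u(α)|·|u(k−α)| ≤ √2 · Σ_{α ≠ 0} |α|·|u(α)|². -/
set_option maxHeartbeats 1000000


/-- The real vector associated to a lattice point, as an element of Euclidean space. -/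
noncomputable def zvec (a : Fin 3 → ℤ) : EuclideanSpace ℝ (Fin 3) := WithLp.toLp 2 (fun i => (a i : ℝ))

lemma znorm_eq_norm (a : Fin 3 → ℤ) : znorm a = ‖zvec a‖ := by
  rw [EuclideanSpace.norm_eq]
  unfold znorm zvec
  congr 1
  refine Finset.sum_congr rfl fun i _ => ?_
  rw [Real.norm_eq_abs, sq_abs]

lemma znorm_triangle (k a : Fin 3 → ℤ) : znorm a ≤ znorm k + znorm (k - a) := by
  rw [znorm_eq_norm, znorm_eq_norm, znorm_eq_norm]
  have h : zvec a = zvec k - zvec (k - a) := by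
    ext i
    simp [zvec, Pi.sub_apply]
  rw [h]
  exact norm_sub_le _ _

lemma amgm_wt (s2 A B x y : ℝ) (hA : 0 ≤ A) (hB : 0 ≤ B) (hAB : A ≤ 2 * B)
    (hx : 0 ≤ x) (hy : 0 ≤ y) (hss : s2 * s2 = 2) (hs : 0 < s2) :
    A * x * y ≤ s2 / 2 * (A * x ^ 2) + s2 / 2 * (B * y ^ 2) := by
  nlinarith [mul_nonneg hA (sq_nonneg (s2 * x - y)),
    mul_le_mul_of_nonneg_right hAB (sq_nonneg y),
    mul_nonneg hA (sq_nonneg x), mul_nonneg hB (sq_nonneg y)]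

/-- For `u : ℤ³ → ℂ` with `u 0 = 0` and summable `∑_{α ≠ 0} |α||u α|²`, and `k ≠ 0`,
the sum `∑_{|α| ≥ 2|k|} |α||u α||u (k−α)|` converges and is at most
`√2·∑_{α ≠ 0} |α||u α|²`. -/
theorem cauchy_schwarz_high_piece
    (u : (Fin 3 → ℤ) → ℂ) (hu0 : u 0 = 0)
    (hsum : Summable (fun α : {a : Fin 3 → ℤ // a ≠ 0} => znorm α.1 * ‖u α.1‖ ^ 2))
    (k : Fin 3 → ℤ) (hk : k ≠ 0) :
    Summable (fun α : {a : Fin 3 → ℤ // 2 * znorm k ≤ znorm a} =>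
      znorm α.1 * ‖u α.1‖ * ‖u (k - α.1)‖) ∧
    (∑' α : {a : Fin 3 → ℤ // 2 * znorm k ≤ znorm a},
        znorm α.1 * ‖u α.1‖ * ‖u (k - α.1)‖)
      ≤ Real.sqrt 2 * (∑' α : {a : Fin 3 → ℤ // a ≠ 0}, znorm α.1 * ‖u α.1‖ ^ 2) := by
  have hs2pos : (0:ℝ) < Real.sqrt 2 := Real.sqrt_pos.2 (by norm_num)
  have hss : Real.sqrt 2 * Real.sqrt 2 = 2 := Real.mul_self_sqrt (by norm_num)
  set g : (Fin 3 → ℤ) → ℝ := fun a => znorm a * ‖u a‖ ^ 2 with hgdef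
  have hg0 : g 0 = 0 := by simp [hgdef, znorm_zero]
  have hgnn : ∀ a, 0 ≤ g a := fun a => mul_nonneg (znorm_nonneg a) (sq_nonneg _)
  have hind : ({a : Fin 3 → ℤ | a ≠ 0}).indicator g = g := by
    funext a
    by_cases h : a = 0
    · simp [h, hg0]
    · simp [Set.indicator_of_mem, h]
  have hg : Summable g := by
    have h1 := (summable_subtype_iff_indicator
      (s := {a : Fin 3 → ℤ | a ≠ 0}) (f := g)).1
    rw [hind] at h1
    exact h1 hsum
  have hS : (∑' α : {a : Fin 3 → ℤ // a ≠ 0}, znorm α.1 * ‖u α.1‖ ^ 2) = ∑' a, g a := by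
    have h1 := tsum_subtype ({a : Fin 3 → ℤ | a ≠ 0}) g
    rw [hind] at h1
    exact h1
  have hg' : Summable (fun a => g (k - a)) :=
    ((Equiv.subLeft k).summable_iff).2 hg
  have hg'sum : (∑' a, g (k - a)) = ∑' a, g a := (Equiv.subLeft k).tsum_eq g
  set h : (Fin 3 → ℤ) → ℝ :=
    fun a => Real.sqrt 2 / 2 * g a + Real.sqrt 2 / 2 * g (k - a) with hhdef
  have hh : Summable h := (hg.mul_left _).add (hg'.mul_left _)
  have hhnn : ∀ a, 0 ≤ h a := fun a =>
    add_nonneg (mul_nonneg (by positivity) (hgnn a)) (mul_nonneg (by positivity) (hgnn _))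
  -- pointwise bound on the subtype
  have key : ∀ α : {a : Fin 3 → ℤ // 2 * znorm k ≤ znorm a},
      znorm α.1 * ‖u α.1‖ * ‖u (k - α.1)‖ ≤ h α.1 := by
    rintro ⟨a, ha⟩
    have htri : znorm a ≤ znorm k + znorm (k - a) := znorm_triangle k a
    have hAB : znorm a ≤ 2 * znorm (k - a) := by linarith
    exact amgm_wt (Real.sqrt 2) (znorm a) (znorm (k - a)) ‖u a‖ ‖u (k - a)‖
      (znorm_nonneg a) (znorm_nonneg _) hAB (norm_nonneg _) (norm_nonneg _) hss hs2pos
  have hhsub : Summable (fun α : {a : Fin 3 → ℤ // 2 * znorm k ≤ znorm a} => h α.1) :=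
    hh.subtype _
  have hfs : Summable (fun α : {a : Fin 3 → ℤ // 2 * znorm k ≤ znorm a} =>
      znorm α.1 * ‖u α.1‖ * ‖u (k - α.1)‖) := by
    refine Summable.of_nonneg_of_le (fun α => ?_) key hhsub
    exact mul_nonneg (mul_nonneg (znorm_nonneg _) (norm_nonneg _)) (norm_nonneg _)
  refine ⟨hfs, ?_⟩
  have step1 : (∑' α : {a : Fin 3 → ℤ // 2 * znorm k ≤ znorm a},
      znorm α.1 * ‖u α.1‖ * ‖u (k - α.1)‖)
      ≤ ∑' α : {a : Fin 3 → ℤ // 2 * znorm k ≤ znorm a}, h α.1 :=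
    hfs.tsum_le_tsum key hhsub
  have step2 : (∑' α : {a : Fin 3 → ℤ // 2 * znorm k ≤ znorm a}, h α.1) ≤ ∑' a, h a :=
    Summable.tsum_subtype_le h {a : Fin 3 → ℤ | 2 * znorm k ≤ znorm a} hhnn hh
  have step3 : (∑' a, h a) = Real.sqrt 2 * ∑' a, g a := by
    rw [hhdef]
    rw [Summable.tsum_add (hg.mul_left _) (hg'.mul_left _), tsum_mul_left, tsum_mul_left, hg'sum]
    ring
  rw [hS]
  calc (∑' α : {a : Fin 3 → ℤ // 2 * znorm k ≤ znorm a},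
      znorm α.1 * ‖u α.1‖ * ‖u (k - α.1)‖) ≤ ∑' a, h a := le_trans step1 step2
    _ = Real.sqrt 2 * ∑' a, g a := step3
end
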